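/- Let ℰ be a subset of 𝒟 ∩ L^∞ (where 𝒟 = {Z ∈ L¹ : Z ≥ 0 a.s., 𝔼[Z] = 1}) that is dense in 𝒟 ∩ L^∞ with respect to the weak-* topology σ(L^∞, L¹). Then for every X ∈ L¹, sup_{Z ∈ ℰ} 𝔼[-ZX] = esssup(-X), where the right side may equal +∞. -/

import Mathlib

open MeasureTheory
open scoped ENNReal

private lemma aux_int_mul {Ω : Type*} [MeasurableSpace Ω] {ℙ : Measure Ω}
    {Z X : Ω → ℝ} (hZ : AEStronglyMeasurable Z ℙ) (hbdd : eLpNorm Z ⊤ ℙ < ⊤)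
    (hX : Integrable X ℙ) : Integrable (fun ω => Z ω * X ω) ℙ := by
  refine hX.bdd_mul hZ (c := (eLpNorm Z ⊤ ℙ).toReal) ?_
  have := enorm_ae_le_eLpNormEssSup Z ℙ
  rw [eLpNorm_exponent_top] at hbdd
  filter_upwards [this] with ω hω
  simpa using ENNReal.toReal_mono hbdd.ne hω

/-- If `ℰ ⊆ 𝒟 ∩ L^∞` is dense with respect to the weak-* topology `σ(L^∞, L¹)`, then for
every `X ∈ L¹`, `sup_{Z ∈ ℰ} 𝔼[-ZX] = esssup(-X)` (possibly `+∞`). -/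
theorem stmt6 {Ω : Type*} [MeasurableSpace Ω] (ℙ : Measure Ω) [IsProbabilityMeasure ℙ]
    (ℰ : Set (Ω → ℝ))
    (hsub : ℰ ⊆ {Z : Ω → ℝ | Integrable Z ℙ ∧ (∀ᵐ ω ∂ℙ, 0 ≤ Z ω) ∧ (∫ ω, Z ω ∂ℙ) = 1 ∧
      eLpNorm Z ⊤ ℙ < ⊤})
    (hdense : ∀ Z₀ ∈ {Z : Ω → ℝ | Integrable Z ℙ ∧ (∀ᵐ ω ∂ℙ, 0 ≤ Z ω) ∧
        (∫ ω, Z ω ∂ℙ) = 1 ∧ eLpNorm Z ⊤ ℙ < ⊤},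
      ∀ (n : ℕ) (g : Fin n → Ω → ℝ), (∀ i, Integrable (g i) ℙ) → ∀ ε : ℝ, 0 < ε →
        ∃ Z ∈ ℰ, ∀ i, |∫ ω, (Z ω - Z₀ ω) * g i ω ∂ℙ| < ε)
    (X : Ω → ℝ) (hX : Integrable X ℙ) :
    (⨆ Z ∈ ℰ, ((∫ ω, -(Z ω * X ω) ∂ℙ : ℝ) : EReal))
      = essSup (fun ω => ((-X ω : ℝ) : EReal)) ℙ := by
  set M : EReal := essSup (fun ω => ((-X ω : ℝ) : EReal)) ℙ with hM
  have hPne : ℙ ≠ 0 := IsProbabilityMeasure.ne_zero ℙ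
  have hae_le : ∀ᵐ ω ∂ℙ, ((-X ω : ℝ) : EReal) ≤ M := ae_le_essSup
  have hMbot : M ≠ ⊥ := by
    intro hbot
    rw [hbot] at hae_le
    have : Filter.NeBot (ae ℙ) := ae_neBot.mpr hPne
    obtain ⟨ω, hω⟩ := hae_le.exists
    exact (EReal.bot_lt_coe (-X ω)).not_ge hω
  refine le_antisymm ?_ ?_
  · -- upper bound
    refine iSup₂_le fun Z hZ => ?_
    obtain ⟨hZint, hZpos, hZexp, hZbdd⟩ := hsub hZ
    rcases eq_or_ne M ⊤ with hMtop | hMtop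
    · rw [hMtop]; exact le_top
    · set m : ℝ := M.toReal with hm
      have hMm : (m : EReal) = M := EReal.coe_toReal hMtop hMbot
      have hXm : ∀ᵐ ω ∂ℙ, -X ω ≤ m := by
        filter_upwards [hae_le] with ω hω
        exact_mod_cast hMm ▸ hω
      have h1 : ∫ ω, -(Z ω * X ω) ∂ℙ ≤ ∫ ω, Z ω * m ∂ℙ := by
        refine integral_mono_ae (aux_int_mul hZint.1 hZbdd hX).neg (hZint.mul_const m) ?_
        filter_upwards [hZpos, hXm] with ω h0 h1
        calc -(Z ω * X ω) = Z ω * (-X ω) := by ring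
          _ ≤ Z ω * m := mul_le_mul_of_nonneg_left h1 h0
      have h2 : ∫ ω, Z ω * m ∂ℙ = m := by
        rw [integral_mul_const m Z, hZexp, one_mul]
      rw [← hMm]
      exact_mod_cast h1.trans h2.le
  · -- lower bound
    by_contra hlt
    push_neg at hlt
    obtain ⟨c, hSc, hcM⟩ := EReal.exists_between_coe_real hlt
    obtain ⟨c', hcc', hc'M⟩ := EReal.exists_between_coe_real hcM
    have hcc'r : c < c' := by exact_mod_cast hcc'
    -- measurable representative
    set X' : Ω → ℝ := hX.1.mk X with hX'
    have hXX' : X =ᵐ[ℙ] X' := hX.1.ae_eq_mk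
    have hX'meas : StronglyMeasurable X' := hX.1.stronglyMeasurable_mk
    set A : Set Ω := {ω | c' < -X' ω} with hA
    have hAmeas : MeasurableSet A := by
      have : Measurable X' := hX'meas.measurable
      exact measurableSet_lt measurable_const this.neg
    have hApos : ℙ A ≠ 0 := by
      intro h0
      have hXle : ∀ᵐ ω ∂ℙ, -X' ω ≤ c' := by
        rw [ae_iff]
        simpa [A, not_le] using h0
      have : M ≤ (c' : EReal) := by
        refine essSup_le_of_ae_le _ ?_
        filter_upwards [hXle, hXX'] with ω hω h'
        rw [h']
        exact_mod_cast hω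
      exact hc'M.not_ge this
    set a : ℝ := (ℙ A).toReal with ha
    have hafin : ℙ A ≠ ⊤ := (measure_lt_top ℙ A).ne
    have hapos : 0 < a := ENNReal.toReal_pos hApos hafin
    set Z₀ : Ω → ℝ := A.indicator (fun _ => a⁻¹) with hZ₀
    have hZ₀int : Integrable Z₀ ℙ := (integrable_const a⁻¹).indicator hAmeas
    have hZ₀pos : ∀ᵐ ω ∂ℙ, 0 ≤ Z₀ ω := by
      refine Filter.Eventually.of_forall fun ω => ?_
      exact Set.indicator_nonneg (fun _ _ => inv_nonneg.mpr hapos.le) ω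
    have hZ₀exp : (∫ ω, Z₀ ω ∂ℙ) = 1 := by
      rw [hZ₀, integral_indicator_const _ hAmeas]
      simp [measureReal_def, ← ha, smul_eq_mul, mul_inv_cancel₀ hapos.ne']
    have hZ₀bdd : eLpNorm Z₀ ⊤ ℙ < ⊤ := by
      refine (memLp_top_of_bound hZ₀int.1 a⁻¹ ?_).2
      refine Filter.Eventually.of_forall fun ω => ?_
      rw [hZ₀, Real.norm_eq_abs]
      rcases Set.indicator_eq_zero_or_self A (fun _ => a⁻¹) ω with h | h <;> rw [h]
      · simpa using inv_nonneg.mpr hapos.le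
      · rw [abs_of_nonneg (inv_nonneg.mpr hapos.le)]
    have hZ₀mem : Z₀ ∈ {Z : Ω → ℝ | Integrable Z ℙ ∧ (∀ᵐ ω ∂ℙ, 0 ≤ Z ω) ∧
        (∫ ω, Z ω ∂ℙ) = 1 ∧ eLpNorm Z ⊤ ℙ < ⊤} := ⟨hZ₀int, hZ₀pos, hZ₀exp, hZ₀bdd⟩
    -- value of the test functional at Z₀
    have hZ₀X_int : Integrable (fun ω => Z₀ ω * X ω) ℙ := aux_int_mul hZ₀int.1 hZ₀bdd hX
    have hkey : c' ≤ ∫ ω, -(Z₀ ω * X ω) ∂ℙ := by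
      have hptw : (fun ω => -(Z₀ ω * X ω)) = A.indicator (fun ω => a⁻¹ * (-X ω)) := by
        funext ω
        by_cases hω : ω ∈ A
        · simp [hZ₀, Set.indicator_of_mem hω]
        · simp [hZ₀, Set.indicator_of_notMem hω]
      have h1 : ∫ ω, -(Z₀ ω * X ω) ∂ℙ = ∫ ω in A, a⁻¹ * (-X ω) ∂ℙ := by
        rw [hptw, integral_indicator hAmeas]
      have h2 : ∫ ω in A, a⁻¹ * c' ∂ℙ ≤ ∫ ω in A, a⁻¹ * (-X ω) ∂ℙ := by
        refine integral_mono_ae (integrable_const _) ((hX.neg.const_mul a⁻¹).restrict) ?_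
        have hmem : ∀ᵐ ω ∂(ℙ.restrict A), ω ∈ A := ae_restrict_mem hAmeas
        have hXX'r : ∀ᵐ ω ∂(ℙ.restrict A), X ω = X' ω := ae_restrict_of_ae hXX'
        filter_upwards [hmem, hXX'r] with ω h1 h2
        have : c' < -X' ω := h1
        rw [← h2] at this
        exact mul_le_mul_of_nonneg_left this.le (inv_nonneg.mpr hapos.le)
      have h3 : ∫ ω in A, a⁻¹ * c' ∂ℙ = c' := by
        rw [setIntegral_const, measureReal_def, ← ha, smul_eq_mul]
        field_simp
      rw [h1]; rw [h3] at h2; exact h2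
    -- use density with g = X
    obtain ⟨Z, hZℰ, hclose⟩ := hdense Z₀ hZ₀mem 1 (fun _ => X) (fun _ => hX) (c' - c)
      (by linarith)
    have hZprop := hsub hZℰ
    obtain ⟨hZint, hZpos, hZexp, hZbdd⟩ := hZprop
    have hZX_int : Integrable (fun ω => Z ω * X ω) ℙ := aux_int_mul hZint.1 hZbdd hX
    have hdiff : |∫ ω, (Z ω - Z₀ ω) * X ω ∂ℙ| < c' - c := hclose 0
    have hsplit : ∫ ω, (Z ω - Z₀ ω) * X ω ∂ℙ
        = (∫ ω, Z ω * X ω ∂ℙ) - ∫ ω, Z₀ ω * X ω ∂ℙ := by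
      rw [← integral_sub hZX_int hZ₀X_int]
      congr 1; funext ω; ring
    rw [hsplit, abs_lt] at hdiff
    have hZval : c < ∫ ω, -(Z ω * X ω) ∂ℙ := by
      rw [integral_neg]
      have h4 : -(∫ ω, Z₀ ω * X ω ∂ℙ) = ∫ ω, -(Z₀ ω * X ω) ∂ℙ := (integral_neg _).symm
      linarith [hkey, hdiff.1, hdiff.2, h4.symm ▸ hkey]
    have hle : ((∫ ω, -(Z ω * X ω) ∂ℙ : ℝ) : EReal)
        ≤ ⨆ Z ∈ ℰ, ((∫ ω, -(Z ω * X ω) ∂ℙ : ℝ) : EReal) :=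
      le_iSup₂ (f := fun Z _ => ((∫ ω, -(Z ω * X ω) ∂ℙ : ℝ) : EReal)) Z hZℰ
    have : (c : EReal) < ⨆ Z ∈ ℰ, ((∫ ω, -(Z ω * X ω) ∂ℙ : ℝ) : EReal) :=
      lt_of_lt_of_le (by exact_mod_cast hZval) hle
    exact (this.trans hSc).false
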